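/- Let δ' > 3e² be a real (e Euler's number), and let γ1 ≥ 1 and γ2 ≥ 3 be reals. Then log(γ1·δ') + log(γ2·δ') − γ2·(log(γ1·δ') − 1) − 1 < 0. Consequently, for any p > 0, the function γ1 ↦ ẑ(γ1, γ2) = p·[(γ2 − 1)·log(γ1·δ') + (γ1 − 1)·log(γ2·δ')]/(γ1·γ2) is strictly decreasing on [1, ∞), so its maximum over γ1 ∈ [1, B1] (any real B1 ≥ 1) is attained at γ1 = 1. -/

import Mathlib

lemma key_neg_aux (δ' γ2 : ℝ) (hδ' : 3 * Real.exp 1 ^ 2 < δ') (hγ2 : 3 ≤ γ2) :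
    ∀ γ1 : ℝ, 1 ≤ γ1 →
      Real.log (γ1 * δ') + Real.log (γ2 * δ') - γ2 * (Real.log (γ1 * δ') - 1) - 1 < 0 := by
  intro γ1 hγ1
  have h3e : (0:ℝ) < 3 * Real.exp 1 ^ 2 := by positivity
  have hδ0 : 0 < δ' := h3e.trans hδ'
  have hγ10 : (0:ℝ) < γ1 := by linarith
  have hγ20 : (0:ℝ) < γ2 := by linarith
  have ha : 2 + Real.log 3 < Real.log δ' := by
    have := Real.log_lt_log h3e hδ'
    rw [Real.log_mul (by norm_num) (by positivity), Real.log_pow, Real.log_exp] at this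
    push_cast at this
    linarith
  have hlog1 : Real.log (γ1 * δ') = Real.log γ1 + Real.log δ' :=
    Real.log_mul hγ10.ne' hδ0.ne'
  have hlog2 : Real.log (γ2 * δ') = Real.log γ2 + Real.log δ' :=
    Real.log_mul hγ20.ne' hδ0.ne'
  have hlγ1 : 0 ≤ Real.log γ1 := Real.log_nonneg hγ1
  have hlog3 : 1 < Real.log 3 := by
    rw [Real.lt_log_iff_exp_lt (by norm_num)]
    calc Real.exp 1 < 2.7182818286 := Real.exp_one_lt_d9
    _ < 3 := by norm_num
  have hbound : Real.log γ2 ≤ Real.log 3 + γ2 / 3 - 1 := by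
    have h := Real.log_le_sub_one_of_pos (show (0:ℝ) < γ2 / 3 by linarith)
    rw [Real.log_div hγ20.ne' (by norm_num)] at h
    linarith
  rw [hlog1, hlog2]
  nlinarith [mul_nonneg (show (0:ℝ) ≤ γ2 - 1 by linarith) hlγ1,
    mul_pos (show (0:ℝ) < γ2 - 2 by linarith)
      (show (0:ℝ) < Real.log δ' - 2 - Real.log 3 by linarith),
    mul_nonneg (show (0:ℝ) ≤ Real.log 3 by linarith)
      (show (0:ℝ) ≤ γ2 - 3 by linarith)]

lemma anti_aux (δ' γ2 p : ℝ) (hδ0 : 0 < δ') (hγ20 : 0 < γ2) (hp : 0 < p)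
    (hF : ∀ γ1 : ℝ, 1 ≤ γ1 →
      Real.log (γ1 * δ') + Real.log (γ2 * δ') - γ2 * (Real.log (γ1 * δ') - 1) - 1 < 0) :
    StrictAntiOn
      (fun γ1 : ℝ =>
        p * ((γ2 - 1) * Real.log (γ1 * δ') + (γ1 - 1) * Real.log (γ2 * δ')) / (γ1 * γ2))
      (Set.Ici 1) := by
  set L := Real.log (γ2 * δ') with hL
  have hderiv : ∀ x : ℝ, 0 < x →
      HasDerivAt (fun γ1 : ℝ =>
        p * ((γ2 - 1) * Real.log (γ1 * δ') + (γ1 - 1) * L) / (γ1 * γ2))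
        (p * γ2 * ((γ2 - 1) + L - (γ2 - 1) * Real.log (x * δ')) / (x * γ2)^2) x := by
    intro x hx
    have hxd : x * δ' ≠ 0 := by positivity
    have hlog : HasDerivAt (fun γ1 : ℝ => Real.log (γ1 * δ')) (1 / x) x := by
      have h := (Real.hasDerivAt_log hxd).comp x ((hasDerivAt_id x).mul_const δ')
      refine h.congr_deriv ?_
      field_simp
    have hN : HasDerivAt (fun γ1 : ℝ =>
        p * ((γ2 - 1) * Real.log (γ1 * δ') + (γ1 - 1) * L))
        (p * ((γ2 - 1) * (1 / x) + 1 * L)) x :=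
      (((hlog.const_mul (γ2 - 1)).add (((hasDerivAt_id x).sub_const 1).mul_const L)).const_mul p)
    have hD : HasDerivAt (fun γ1 : ℝ => γ1 * γ2) γ2 x := by
      simpa using (hasDerivAt_id x).mul_const γ2
    have hDne : x * γ2 ≠ 0 := by positivity
    have h := hN.div hD hDne
    refine h.congr_deriv ?_
    field_simp
    ring
  apply strictAntiOn_of_deriv_neg (convex_Ici 1)
  · apply ContinuousOn.div
    · apply ContinuousOn.mul continuousOn_const
      apply ContinuousOn.add
      · apply ContinuousOn.mul continuousOn_const
        apply Real.continuousOn_log.comp (continuousOn_id.mul continuousOn_const)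
        intro x hx
        simp only [Set.mem_Ici] at hx
        simp only [Set.mem_compl_iff, Set.mem_singleton_iff, id_eq]
        simp only [Pi.mul_apply, id_eq]
        positivity
      · exact (continuousOn_id.sub continuousOn_const).mul continuousOn_const
    · exact continuousOn_id.mul continuousOn_const
    · intro x hx
      simp only [Set.mem_Ici] at hx
      positivity
  · intro x hx
    rw [interior_Ici] at hx
    have hx1 : (1:ℝ) < x := hx
    have hx0 : (0:ℝ) < x := by linarith
    rw [(hderiv x hx0).deriv]
    apply div_neg_of_neg_of_pos
    · have h := hF x hx1.le
      have heq : (γ2 - 1) + L - (γ2 - 1) * Real.log (x * δ') =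
          Real.log (x * δ') + L - γ2 * (Real.log (x * δ') - 1) - 1 := by ring
      rw [heq]
      exact mul_neg_of_pos_of_neg (by positivity) h
    · positivity

/-- For `δ' > 3e²` and `γ2 ≥ 3`, the derivative factor
`log (γ1 δ') + log (γ2 δ') − γ2 (log (γ1 δ') − 1) − 1` is negative for every
`γ1 ≥ 1`; consequently the upper envelope `γ1 ↦ ẑ (γ1, γ2)` is strictly
decreasing on `[1, ∞)` and its maximum over `[1, B1]` is attained at `γ1 = 1`. -/
theorem upper_envelope_decreasing_for_large_gamma2
    (δ' γ2 : ℝ) (hδ' : 3 * Real.exp 1 ^ 2 < δ') (hγ2 : 3 ≤ γ2) :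
    (∀ γ1 : ℝ, 1 ≤ γ1 →
      Real.log (γ1 * δ') + Real.log (γ2 * δ') - γ2 * (Real.log (γ1 * δ') - 1) - 1 < 0) ∧
    (∀ p : ℝ, 0 < p →
      StrictAntiOn
        (fun γ1 : ℝ =>
          p * ((γ2 - 1) * Real.log (γ1 * δ') + (γ1 - 1) * Real.log (γ2 * δ')) / (γ1 * γ2))
        (Set.Ici 1) ∧
      ∀ B1 : ℝ, 1 ≤ B1 → ∀ γ1 : ℝ, 1 ≤ γ1 → γ1 ≤ B1 →
        p * ((γ2 - 1) * Real.log (γ1 * δ') + (γ1 - 1) * Real.log (γ2 * δ')) / (γ1 * γ2) ≤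
          p * ((γ2 - 1) * Real.log (1 * δ') + (1 - 1) * Real.log (γ2 * δ')) / (1 * γ2)) := by
  have hF := key_neg_aux δ' γ2 hδ' hγ2
  have h3e : (0:ℝ) < 3 * Real.exp 1 ^ 2 := by positivity
  have hδ0 : 0 < δ' := h3e.trans hδ'
  have hγ20 : (0:ℝ) < γ2 := by linarith
  refine ⟨hF, fun p hp => ?_⟩
  have hanti := anti_aux δ' γ2 p hδ0 hγ20 hp hF
  refine ⟨hanti, fun B1 _ γ1 hγ1 _ => ?_⟩
  rcases eq_or_lt_of_le hγ1 with h | h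
  · rw [← h]
  · exact (hanti (Set.self_mem_Ici) (Set.mem_Ici.mpr hγ1) h).le
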